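/- Let c be a locating rainbow coloring of a finite connected simple graph G, and let u and v be two distinct vertices of G. If d(u,x) = d(v,x) for every vertex x ∈ V(G) \ {u,v}, then c(u) ≠ c(v). -/
import Mathlib


namespace LocatingRainbow

open SimpleGraph

variable {V : Type*}

/-- The internal vertices of a walk: its support without the endpoints. -/
def internalVertices {G : SimpleGraph V} {u v : V} (p : G.Walk u v) : List V :=
  p.support.tail.dropLast

/-- `c` is a rainbow vertex coloring of `G` (with colors in `Fin k`) if any two distinct
vertices are joined by a path whose internal vertices have pairwise distinct colors. -/
def IsRainbowVertexColoring (G : SimpleGraph V) {k : ℕ} (c : V → Fin k) : Prop :=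
  ∀ u v : V, u ≠ v → ∃ p : G.Walk u v, p.IsPath ∧ ((internalVertices p).map c).Nodup

/-- The distance from a vertex `v` to the color class of the color `i`. -/
noncomputable def distToColor (G : SimpleGraph V) {k : ℕ} (c : V → Fin k) (v : V) (i : Fin k) :
    ℕ :=
  sInf {m | ∃ y, c y = i ∧ G.dist v y = m}

/-- The rainbow code of a vertex `v`: the vector of distances to all color classes. -/
noncomputable def rainbowCode (G : SimpleGraph V) {k : ℕ} (c : V → Fin k) (v : V) :
    Fin k → ℕ :=
  fun i => distToColor G c v i

/-- `c` is a locating rainbow coloring if it is a rainbow vertex coloring and distinct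
vertices have distinct rainbow codes. -/
def IsLocatingRainbowColoring (G : SimpleGraph V) {k : ℕ} (c : V → Fin k) : Prop :=
  IsRainbowVertexColoring G c ∧ Function.Injective (rainbowCode G c)

/-- The rainbow vertex connection number of `G`. -/
noncomputable def rvc (G : SimpleGraph V) : ℕ :=
  sInf {k | ∃ c : V → Fin k, IsRainbowVertexColoring G c}

/-- The locating rainbow connection number of `G`. -/
noncomputable def rvcl (G : SimpleGraph V) : ℕ :=
  sInf {k | ∃ c : V → Fin k, IsLocatingRainbowColoring G c}

end LocatingRainbow

open LocatingRainbow in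
/-- If `c` is a locating rainbow coloring of a finite connected simple graph `G` and
`u ≠ v` satisfy `d(u,x) = d(v,x)` for every other vertex `x`, then `c u ≠ c v`. -/
theorem color_ne_of_dist_eq {V : Type*} [Fintype V] (G : SimpleGraph V) (hG : G.Connected)
    {k : ℕ} (c : V → Fin k) (hc : IsLocatingRainbowColoring G c)
    (u v : V) (huv : u ≠ v)
    (hdist : ∀ x : V, x ≠ u → x ≠ v → G.dist u x = G.dist v x) :
    c u ≠ c v := by
  intro hcc
  apply huv
  apply hc.2
  funext i
  unfold rainbowCode distToColor
  by_cases hi : i = c u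
  · have h1 : (0 : ℕ) ∈ {m | ∃ y, c y = i ∧ G.dist u y = m} :=
      ⟨u, hi.symm, G.dist_self⟩
    have h2 : (0 : ℕ) ∈ {m | ∃ y, c y = i ∧ G.dist v y = m} :=
      ⟨v, hcc ▸ hi.symm, G.dist_self⟩
    have := Nat.sInf_le h1
    have := Nat.sInf_le h2
    omega
  · congr 1
    ext m
    constructor
    · rintro ⟨y, hy, rfl⟩
      have hyu : y ≠ u := fun h => hi ((h ▸ hy).symm)
      have hyv : y ≠ v := fun h => hi (((h ▸ hy).symm).trans hcc.symm)
      exact ⟨y, hy, (hdist y hyu hyv).symm⟩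
    · rintro ⟨y, hy, rfl⟩
      have hyu : y ≠ u := fun h => hi ((h ▸ hy).symm)
      have hyv : y ≠ v := fun h => hi (((h ▸ hy).symm).trans hcc.symm)
      exact ⟨y, hy, hdist y hyu hyv⟩
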